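/- (Consequence of Selberg's lemma) Every finitely generated subgroup Γ of GL(n,ℚ) contains a torsion-free subgroup of finite index. -/

import Mathlib

/-- A predicate on a monoid saying that only 1 is of finite order (as in the older Mathlib). -/
def Monoid.IsTorsionFree (G : Type*) [Monoid G] : Prop :=
  ∀ g : G, g ≠ 1 → ¬IsOfFinOrder g

open Finset

namespace SelbergAux

variable {p : ℕ} [hp : Fact p.Prime]

lemma norm_le_one_of_not_dvd_den {x : ℚ} (h : ¬ p ∣ x.den) : padicNorm p x ≤ 1 := by
  have hx : padicNorm p x = padicNorm p (x.num : ℚ) / padicNorm p (x.den : ℚ) := by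
    rw [← padicNorm.div, Rat.num_div_den]
  rw [hx, (padicNorm.nat_eq_one_iff _).2 h, div_one]
  exact_mod_cast padicNorm.of_int (p := p) x.num

lemma not_dvd_den_of_norm_le_one {x : ℚ} (h : padicNorm p x ≤ 1) : ¬ p ∣ x.den := by
  intro hdvd
  have hx0 : x ≠ 0 := by
    rintro rfl
    simp only [Rat.den_ofNat, Nat.dvd_one] at hdvd
    exact hp.out.ne_one hdvd
  have hnum : ¬ (p : ℤ) ∣ x.num := by
    intro hd
    have h1 : p ∣ x.num.natAbs := by simpa using Int.natAbs_dvd_natAbs.mpr hd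
    have := Nat.dvd_gcd h1 hdvd
    rw [Nat.Coprime.gcd_eq_one x.reduced] at this
    exact hp.out.ne_one (Nat.dvd_one.mp this)
  have hxe : padicNorm p x = padicNorm p (x.num : ℚ) / padicNorm p (x.den : ℚ) := by
    rw [← padicNorm.div, Rat.num_div_den]
  have hn1 : padicNorm p (x.num : ℚ) = 1 := by
    have := (padicNorm.int_eq_one_iff (p := p) x.num).2 hnum
    exact_mod_cast this
  have hd1 : padicNorm p (x.den : ℚ) < 1 := (padicNorm.nat_lt_one_iff _).2 hdvd
  have hdpos : 0 < padicNorm p (x.den : ℚ) := by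
    have hdk : ((x.den : ℚ)) ≠ 0 := by exact_mod_cast x.den_nz
    exact lt_of_le_of_ne (padicNorm.nonneg _) (Ne.symm (padicNorm.nonzero hdk))
  rw [hxe, hn1] at h
  have : (1 : ℚ) < 1 / padicNorm p (x.den : ℚ) := by rw [one_lt_div hdpos]; exact hd1
  linarith

lemma den_cast_ne_zero {x : ℚ} (h : padicNorm p x ≤ 1) : ((x.den : ZMod p)) ≠ 0 := by
  haveI : NeZero p := ⟨hp.out.ne_zero⟩
  rw [Ne, ZMod.natCast_eq_zero_iff]
  exact not_dvd_den_of_norm_le_one h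

lemma norm_le_inv_of_cast_eq_zero {x : ℚ} (h1 : padicNorm p x ≤ 1)
    (h0 : (x : ZMod p) = 0) : padicNorm p x ≤ (p : ℚ)⁻¹ := by
  rcases eq_or_ne x 0 with rfl | hx
  · simp only [padicNorm.zero]
    positivity
  · have hden := den_cast_ne_zero (p := p) h1
    have hnum : ((x.num : ZMod p)) = 0 := by
      rw [Rat.cast_def, div_eq_zero_iff] at h0
      exact h0.resolve_right hden
    have hdvd : (p : ℤ) ∣ x.num := (ZMod.intCast_zmod_eq_zero_iff_dvd _ _).1 hnum
    have hle : padicNorm p (x.num : ℚ) ≤ (p : ℚ) ^ (-(1 : ℕ) : ℤ) :=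
      padicNorm.dvd_iff_norm_le.mp (by simpa using hdvd)
    have hxe : padicNorm p x = padicNorm p (x.num : ℚ) / padicNorm p (x.den : ℚ) := by
      rw [← padicNorm.div, Rat.num_div_den]
    have hd1 : padicNorm p (x.den : ℚ) = 1 :=
      (padicNorm.nat_eq_one_iff _).2 (not_dvd_den_of_norm_le_one h1)
    rw [hxe, hd1, div_one]
    simpa using hle

lemma cast_sum_zmod {α : Type*} (s : Finset α) (f : α → ℚ)
    (h : ∀ a ∈ s, padicNorm p (f a) ≤ 1) :
    ((∑ a ∈ s, f a : ℚ) : ZMod p) = ∑ a ∈ s, ((f a : ZMod p)) := by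
  classical
  induction s using Finset.induction with
  | empty => simp
  | @insert a s has ih =>
    rw [Finset.sum_insert has, Finset.sum_insert has,
      Rat.cast_add_of_ne_zero (den_cast_ne_zero (h a (mem_insert_self a s)))
        (den_cast_ne_zero (padicNorm.sum_le' (fun b hb => h b (mem_insert_of_mem hb))
          zero_le_one)),
      ih (fun b hb => h b (mem_insert_of_mem hb))]

variable (p) in
/-- Entrywise reduction of a rational matrix mod `p`. -/
def red {n : ℕ} (M : Matrix (Fin n) (Fin n) ℚ) : Matrix (Fin n) (Fin n) (ZMod p) :=
  fun i j => ((M i j : ℚ) : ZMod p)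

variable (p) in
/-- All entries are `p`-integral. -/
def Ent {n : ℕ} (M : Matrix (Fin n) (Fin n) ℚ) : Prop :=
  ∀ i j, padicNorm p (M i j) ≤ 1

lemma Ent.one {n : ℕ} : Ent p (1 : Matrix (Fin n) (Fin n) ℚ) := by
  intro i j
  by_cases h : i = j <;> simp [Matrix.one_apply, h]

lemma Ent.mul {n : ℕ} {M N : Matrix (Fin n) (Fin n) ℚ} (hM : Ent p M) (hN : Ent p N) :
    Ent p (M * N) := by
  intro i j
  rw [Matrix.mul_apply]
  refine padicNorm.sum_le' (fun x _ => ?_) zero_le_one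
  rw [padicNorm.mul]
  exact mul_le_one₀ (hM i x) (padicNorm.nonneg _) (hN x j)

lemma red_one {n : ℕ} : red p (1 : Matrix (Fin n) (Fin n) ℚ) = 1 := by
  ext i j
  by_cases h : i = j <;> simp [red, Matrix.one_apply, h]

lemma red_mul {n : ℕ} {M N : Matrix (Fin n) (Fin n) ℚ} (hM : Ent p M) (hN : Ent p N) :
    red p (M * N) = red p M * red p N := by
  ext i j
  simp only [red, Matrix.mul_apply]
  rw [cast_sum_zmod _ _ (fun x _ => by
    rw [padicNorm.mul]
    exact mul_le_one₀ (hM i x) (padicNorm.nonneg _) (hN x j))]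
  exact Finset.sum_congr rfl fun x _ =>
    Rat.cast_mul_of_ne_zero (den_cast_ne_zero (hM i x)) (den_cast_ne_zero (hN x j))

variable (p) in
/-- The subgroup of `GL(n,ℚ)` of matrices whose entries (and their inverses' entries)
are `p`-integral. -/
def Delta (n : ℕ) : Subgroup (GL (Fin n) ℚ) where
  carrier := {g | Ent p ((g : Matrix (Fin n) (Fin n) ℚ)) ∧
    Ent p (((g⁻¹ : GL (Fin n) ℚ) : Matrix (Fin n) (Fin n) ℚ))}
  one_mem' := by
    refine ⟨Ent.one, ?_⟩
    simpa using (Ent.one (p := p) (n := n))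
  mul_mem' := by
    rintro a b ⟨ha1, ha2⟩ ⟨hb1, hb2⟩
    refine ⟨?_, ?_⟩
    · rw [Units.val_mul]; exact ha1.mul hb1
    · rw [mul_inv_rev, Units.val_mul]; exact hb2.mul ha2
  inv_mem' := by
    rintro a ⟨h1, h2⟩
    refine ⟨h2, ?_⟩
    rw [inv_inv]; exact h1

variable (p) in
/-- The reduction homomorphism from a subgroup contained in `Delta` to `GL(n, ZMod p)`. -/
def toGL {n : ℕ} (Γ : Subgroup (GL (Fin n) ℚ)) (hsub : Γ ≤ Delta p n) :
    ↥Γ →* GL (Fin n) (ZMod p) where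
  toFun γ :=
    { val := red p ((γ : GL (Fin n) ℚ) : Matrix (Fin n) (Fin n) ℚ)
      inv := red p (((γ : GL (Fin n) ℚ))⁻¹ : GL (Fin n) ℚ)
      val_inv := by
        rw [← red_mul (hsub γ.2).1 (hsub γ.2).2, ← Units.val_mul, mul_inv_cancel,
          Units.val_one, red_one]
      inv_val := by
        rw [← red_mul (hsub γ.2).2 (hsub γ.2).1, ← Units.val_mul, inv_mul_cancel,
          Units.val_one, red_one] }
  map_one' := by
    apply Units.ext
    simpa using (red_one (p := p) (n := n))
  map_mul' a b := by
    apply Units.ext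
    show red p (((a * b : ↥Γ) : GL (Fin n) ℚ) : Matrix (Fin n) (Fin n) ℚ) = _
    rw [Subgroup.coe_mul, Units.val_mul, red_mul (hsub a.2).1 (hsub b.2).1]
    rfl

lemma pow_entry_eq {n : ℕ} (B : Matrix (Fin n) (Fin n) ℚ) (ℓ : ℕ) (i j : Fin n) :
    ((1 + B) ^ ℓ) i j
      = (1 : Matrix (Fin n) (Fin n) ℚ) i j
        + ∑ k ∈ Finset.Icc 1 ℓ, (ℓ.choose k : ℚ) * (B ^ k) i j := by
  have h := (Commute.one_right B).add_pow ℓ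
  rw [add_comm] at h
  have h' := congrArg (fun M : Matrix (Fin n) (Fin n) ℚ => M i j) h
  simp only [Matrix.sum_apply] at h'
  have hterm : ∀ k, (B ^ k * (1 : Matrix (Fin n) (Fin n) ℚ) ^ (ℓ - k)
      * ((ℓ.choose k : ℕ) : Matrix (Fin n) (Fin n) ℚ)) i j
      = (ℓ.choose k : ℚ) * (B ^ k) i j := by
    intro k
    rw [one_pow, mul_one]
    rw [← Matrix.diagonal_natCast, Matrix.mul_diagonal]
    ring
  rw [h']
  have hmem : (0 : ℕ) ∈ Finset.range (ℓ + 1) := by simp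
  rw [← Finset.add_sum_erase _ _ hmem]
  have herase : (Finset.range (ℓ + 1)).erase 0 = Finset.Icc 1 ℓ := by
    ext x
    simp only [Finset.mem_erase, Finset.mem_range, Finset.mem_Icc]
    omega
  rw [herase]
  congr 1
  · rw [hterm 0]
    simp
  · exact Finset.sum_congr rfl fun k _ => hterm k

lemma key (hp3 : 3 ≤ p) {n : ℕ} (B : Matrix (Fin n) (Fin n) ℚ) (hB : B ≠ 0)
    (hent : ∀ i j, padicNorm p (B i j) ≤ (p : ℚ)⁻¹) {ℓ : ℕ} (hl : ℓ.Prime) :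
    (1 + B) ^ ℓ ≠ 1 := by
  -- a nonzero entry exists
  have hne : ∃ q : Fin n × Fin n, B q.1 q.2 ≠ 0 := by
    by_contra h
    push_neg at h
    exact hB (by ext i j; simpa using h (i, j))
  obtain ⟨q0, hq0⟩ := hne
  have hNE : (Finset.univ : Finset (Fin n × Fin n)).Nonempty := ⟨q0, mem_univ _⟩
  set t := Finset.univ.sup' hNE (fun q : Fin n × Fin n => padicNorm p (B q.1 q.2)) with htdef
  obtain ⟨q1, -, hij⟩ := Finset.exists_mem_eq_sup' hNE
    (fun q : Fin n × Fin n => padicNorm p (B q.1 q.2))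
  have htle : ∀ i j, padicNorm p (B i j) ≤ t := fun i j =>
    Finset.le_sup' (f := fun q : Fin n × Fin n => padicNorm p (B q.1 q.2)) (mem_univ (i, j))
  have htpos : 0 < t :=
    lt_of_lt_of_le (lt_of_le_of_ne (padicNorm.nonneg _)
      (Ne.symm (padicNorm.nonzero hq0))) (htle q0.1 q0.2)
  have htinv : t ≤ (p : ℚ)⁻¹ := Finset.sup'_le _ _ fun q _ => hent q.1 q.2
  have hp1 : (1 : ℚ) < p := by
    have : (3 : ℚ) ≤ p := by exact_mod_cast hp3
    linarith
  have hpinvpos : (0 : ℚ) < (p : ℚ)⁻¹ := by positivity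
  have hpinv1 : (p : ℚ)⁻¹ < 1 := by
    rw [inv_lt_one_iff₀]; right; exact hp1
  have ht1 : t < 1 := lt_of_le_of_lt htinv hpinv1
  have ht2t : t ^ 2 < t := by nlinarith
  -- bound on entries of powers
  have powB : ∀ k, 1 ≤ k → ∀ i j, padicNorm p ((B ^ k) i j) ≤ t ^ k := by
    intro k
    induction k with
    | zero => omega
    | succ m ih =>
      intro _ i j
      rcases Nat.eq_zero_or_pos m with rfl | hm
      · simpa using htle i j
      · rw [pow_succ, Matrix.mul_apply]
        refine padicNorm.sum_le' (fun x _ => ?_) (by positivity)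
        rw [padicNorm.mul, pow_succ]
        exact mul_le_mul (ih hm i x) (htle x j) (padicNorm.nonneg _) (by positivity)
  set c := padicNorm p (ℓ : ℚ) * t with hcdef
  have hlnorm_pos : 0 < padicNorm p (ℓ : ℚ) := by
    have hℓ0 : ((ℓ : ℚ)) ≠ 0 := by exact_mod_cast hl.ne_zero
    exact lt_of_le_of_ne (padicNorm.nonneg _) (Ne.symm (padicNorm.nonzero hℓ0))
  have hcpos : 0 < c := mul_pos hlnorm_pos htpos
  -- the tail terms are strictly smaller than c
  have tail_lt : ∀ k ∈ (Finset.Icc 1 ℓ).erase 1,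
      padicNorm p ((ℓ.choose k : ℚ) * (B ^ k) q1.1 q1.2) < c := by
    intro k hk
    simp only [Finset.mem_erase, Finset.mem_Icc] at hk
    obtain ⟨hk1, hk1', hkℓ⟩ := hk
    have hk2 : 2 ≤ k := by omega
    have hBk : padicNorm p ((B ^ k) q1.1 q1.2) ≤ t ^ k := powB k (by omega) q1.1 q1.2
    have htk2 : t ^ k ≤ t ^ 2 := pow_le_pow_of_le_one htpos.le ht1.le hk2
    rw [padicNorm.mul]
    by_cases hlp : ℓ = p
    · have hnormp : padicNorm p ((ℓ : ℚ)) = (p : ℚ)⁻¹ := by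
        rw [hlp]; exact padicNorm.padicNorm_p_of_prime
      rw [hcdef, hnormp]
      by_cases hkl : k = ℓ
      · have hch : padicNorm p ((ℓ.choose k : ℚ)) ≤ 1 := by
          simpa using padicNorm.of_nat (p := p) (ℓ.choose k)
        have h3k : t ^ k ≤ t ^ 3 := by
          refine pow_le_pow_of_le_one htpos.le ht1.le ?_
          omega
        have ht3 : t ^ 3 < (p : ℚ)⁻¹ * t := by nlinarith
        calc padicNorm p ((ℓ.choose k : ℚ)) * padicNorm p ((B ^ k) q1.1 q1.2)
            ≤ 1 * t ^ k := mul_le_mul hch hBk (padicNorm.nonneg _) zero_le_one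
          _ = t ^ k := one_mul _
          _ ≤ t ^ 3 := h3k
          _ < (p : ℚ)⁻¹ * t := ht3
      · have hklt : k < ℓ := lt_of_le_of_ne hkℓ hkl
        have hdvd : p ∣ ℓ.choose k := by
          rw [← hlp]
          exact hl.dvd_choose_self (by omega) hklt
        have hch : padicNorm p ((ℓ.choose k : ℚ)) ≤ (p : ℚ)⁻¹ := by
          have : padicNorm p (((ℓ.choose k : ℤ) : ℚ)) ≤ (p : ℚ) ^ (-(1 : ℕ) : ℤ) :=
            padicNorm.dvd_iff_norm_le.mp (by
              have : p ^ 1 ∣ ℓ.choose k := by simpa using hdvd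
              exact_mod_cast this)
          simpa using this
        calc padicNorm p ((ℓ.choose k : ℚ)) * padicNorm p ((B ^ k) q1.1 q1.2)
            ≤ (p : ℚ)⁻¹ * t ^ k := mul_le_mul hch hBk (padicNorm.nonneg _) hpinvpos.le
          _ ≤ (p : ℚ)⁻¹ * t ^ 2 := by nlinarith
          _ < (p : ℚ)⁻¹ * t := by nlinarith
    · have hndvd : ¬ p ∣ ℓ := by
        intro hd
        exact hlp ((Nat.prime_dvd_prime_iff_eq hp.out hl).1 hd).symm
      have hnorml : padicNorm p ((ℓ : ℚ)) = 1 := by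
        have := (padicNorm.nat_eq_one_iff (p := p) ℓ).2 hndvd
        exact_mod_cast this
      rw [hcdef, hnorml, one_mul]
      have hch : padicNorm p ((ℓ.choose k : ℚ)) ≤ 1 := by
        simpa using padicNorm.of_nat (p := p) (ℓ.choose k)
      calc padicNorm p ((ℓ.choose k : ℚ)) * padicNorm p ((B ^ k) q1.1 q1.2)
          ≤ 1 * t ^ k := mul_le_mul hch hBk (padicNorm.nonneg _) zero_le_one
        _ = t ^ k := one_mul _
        _ ≤ t ^ 2 := htk2
        _ < t := ht2t
  -- now the main argument
  intro hcontra
  have hE := congrArg (fun M : Matrix (Fin n) (Fin n) ℚ => M q1.1 q1.2) hcontra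
  rw [pow_entry_eq] at hE
  have hsum0 : ∑ k ∈ Finset.Icc 1 ℓ, (ℓ.choose k : ℚ) * (B ^ k) q1.1 q1.2 = 0 :=
    add_eq_left.mp hE
  have h1mem : (1 : ℕ) ∈ Finset.Icc 1 ℓ := by
    simp only [Finset.mem_Icc]
    exact ⟨le_refl 1, hl.one_lt.le⟩
  have hsplit := Finset.add_sum_erase (Finset.Icc 1 ℓ)
    (fun k => (ℓ.choose k : ℚ) * (B ^ k) q1.1 q1.2) h1mem
  have hteq : t = padicNorm p (B q1.1 q1.2) := by rw [htdef]; exact hij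
  have hnorm1 : padicNorm p ((ℓ.choose 1 : ℚ) * (B ^ 1) q1.1 q1.2) = c := by
    rw [Nat.choose_one_right, pow_one, padicNorm.mul, hcdef, hteq]
  have htail : padicNorm p (∑ k ∈ (Finset.Icc 1 ℓ).erase 1,
      (ℓ.choose k : ℚ) * (B ^ k) q1.1 q1.2) < c := padicNorm.sum_lt' tail_lt hcpos
  have hne' : padicNorm p ((ℓ.choose 1 : ℚ) * (B ^ 1) q1.1 q1.2)
      ≠ padicNorm p (∑ k ∈ (Finset.Icc 1 ℓ).erase 1,
        (ℓ.choose k : ℚ) * (B ^ k) q1.1 q1.2) := by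
    rw [hnorm1]
    exact fun h => absurd (h ▸ htail) (lt_irrefl _)
  have hmax := padicNorm.add_eq_max_of_ne hne'
  rw [hsplit, hsum0] at hmax
  rw [hnorm1] at hmax
  have : (0 : ℚ) = max c (padicNorm p (∑ k ∈ (Finset.Icc 1 ℓ).erase 1,
      (ℓ.choose k : ℚ) * (B ^ k) q1.1 q1.2)) := by simpa using hmax
  have hcle : c ≤ (0 : ℚ) := this ▸ le_max_left _ _
  linarith

end SelbergAux

open SelbergAux in
/-- consequence of Selberg's lemma: every finitely generated subgroup of
GL(n,ℚ) contains a torsion-free subgroup of finite index. -/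
theorem selberg_lemma (n : ℕ) (Γ : Subgroup (Matrix.GeneralLinearGroup (Fin n) ℚ))
    (hfg : Group.FG Γ) :
    ∃ H : Subgroup Γ, H.FiniteIndex ∧ Monoid.IsTorsionFree H := by
  classical
  obtain ⟨S, hScl, hSfin⟩ := (Subgroup.fg_iff Γ).1 ((Group.fg_iff_subgroup_fg Γ).1 hfg)
  -- bound on denominators of entries of generators and their inverses
  set M : ℕ := hSfin.toFinset.sup (fun g =>
    Finset.univ.sup fun ij : Fin n × Fin n =>
      max ((g : Matrix (Fin n) (Fin n) ℚ) ij.1 ij.2).den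
        (((g⁻¹ : GL (Fin n) ℚ) : Matrix (Fin n) (Fin n) ℚ) ij.1 ij.2).den) with hMdef
  obtain ⟨p, hpM, hpprime⟩ := Nat.exists_infinite_primes (M + 3)
  haveI : Fact p.Prime := ⟨hpprime⟩
  have hp3 : 3 ≤ p := by omega
  -- Γ is contained in Delta p n
  have hsub : Γ ≤ Delta p n := by
    rw [← hScl, Subgroup.closure_le]
    intro g hg
    have hgmem : g ∈ hSfin.toFinset := hSfin.mem_toFinset.2 hg
    have hden : ∀ (x : ℚ), x.den ≤ M → padicNorm p x ≤ 1 := by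
      intro x hx
      apply norm_le_one_of_not_dvd_den
      intro hdvd
      have := Nat.le_of_dvd x.pos hdvd
      omega
    have hbound : ∀ ij : Fin n × Fin n,
        max ((g : Matrix (Fin n) (Fin n) ℚ) ij.1 ij.2).den
          (((g⁻¹ : GL (Fin n) ℚ) : Matrix (Fin n) (Fin n) ℚ) ij.1 ij.2).den ≤ M := by
      intro ij
      calc _ ≤ Finset.univ.sup fun ij : Fin n × Fin n =>
            max ((g : Matrix (Fin n) (Fin n) ℚ) ij.1 ij.2).den
              (((g⁻¹ : GL (Fin n) ℚ) : Matrix (Fin n) (Fin n) ℚ) ij.1 ij.2).den :=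
            Finset.le_sup (Finset.mem_univ ij)
        _ ≤ M := by
            rw [hMdef]
            exact Finset.le_sup (f := fun g : GL (Fin n) ℚ =>
              Finset.univ.sup fun ij : Fin n × Fin n =>
                max ((g : Matrix (Fin n) (Fin n) ℚ) ij.1 ij.2).den
                  (((g⁻¹ : GL (Fin n) ℚ) : Matrix (Fin n) (Fin n) ℚ) ij.1 ij.2).den) hgmem
    constructor
    · intro i j
      exact hden _ (le_trans (le_max_left _ _) (hbound (i, j)))
    · intro i j
      exact hden _ (le_trans (le_max_right _ _) (hbound (i, j)))
  set f := toGL p Γ hsub with hfdef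
  refine ⟨f.ker, Subgroup.finiteIndex_ker f, ?_⟩
  -- torsion-freeness
  intro g hg1 hfin
  set m := orderOf g with hmdef
  have hm0 : m ≠ 0 := hfin.orderOf_pos.ne'
  have hm1 : m ≠ 1 := fun h => hg1 (orderOf_eq_one_iff.1 h)
  set ℓ := m.minFac with hldef
  have hlp : ℓ.Prime := Nat.minFac_prime hm1
  have hld : ℓ ∣ m := Nat.minFac_dvd m
  set h : ↥f.ker := g ^ (m / ℓ) with hhdef
  have hh1 : h ≠ 1 := by
    intro he
    have hdvd : m ∣ m / ℓ := orderOf_dvd_iff_pow_eq_one.2 he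
    have hlt : m / ℓ < m := Nat.div_lt_self (Nat.pos_of_ne_zero hm0) hlp.one_lt
    have hne0 : m / ℓ ≠ 0 := by
      have := Nat.div_mul_cancel hld
      intro hz
      rw [hz, zero_mul] at this
      exact hm0 this.symm
    have := Nat.le_of_dvd (Nat.pos_of_ne_zero hne0) hdvd
    omega
  have hhl : h ^ ℓ = 1 := by
    rw [hhdef, ← pow_mul, Nat.div_mul_cancel hld, hmdef]
    exact pow_orderOf_eq_one g
  -- push to GL(n,ℚ)
  set u : GL (Fin n) ℚ := ((h : ↥Γ) : GL (Fin n) ℚ) with hudef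
  have hu1 : u ≠ 1 := by
    intro he
    apply hh1
    have h2 : (h : ↥Γ) = 1 := Subtype.ext he
    exact Subtype.ext h2
  have hul : u ^ ℓ = 1 := by
    have := congrArg (fun z : ↥f.ker => (((z : ↥Γ) : GL (Fin n) ℚ))) hhl
    simpa using this
  have hker : f (h : ↥Γ) = 1 := h.2
  have hred : red p ((u : Matrix (Fin n) (Fin n) ℚ)) = 1 := congrArg Units.val hker
  have hΔ : u ∈ Delta p n := hsub (h : ↥Γ).2
  set B : Matrix (Fin n) (Fin n) ℚ := (u : Matrix (Fin n) (Fin n) ℚ) - 1 with hBdef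
  have h1B : (1 : Matrix (Fin n) (Fin n) ℚ) + B = (u : Matrix (Fin n) (Fin n) ℚ) := by
    rw [hBdef]; abel
  have hBne : B ≠ 0 := by
    rw [hBdef, sub_ne_zero]
    exact fun he => hu1 (Units.ext he)
  have hent1 : ∀ i j, padicNorm p ((1 : Matrix (Fin n) (Fin n) ℚ) i j) ≤ 1 :=
    Ent.one (p := p)
  have hBnorm : ∀ i j, padicNorm p (B i j) ≤ (p : ℚ)⁻¹ := by
    intro i j
    have hx1 : padicNorm p (B i j) ≤ 1 := by
      rw [hBdef]
      have : ((u : Matrix (Fin n) (Fin n) ℚ) - 1) i j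
          = (u : Matrix (Fin n) (Fin n) ℚ) i j - (1 : Matrix (Fin n) (Fin n) ℚ) i j := rfl
      rw [this]
      exact le_trans padicNorm.sub (max_le (hΔ.1 i j) (hent1 i j))
    apply norm_le_inv_of_cast_eq_zero hx1
    have hBij : B i j
        = (u : Matrix (Fin n) (Fin n) ℚ) i j - (1 : Matrix (Fin n) (Fin n) ℚ) i j := rfl
    rw [hBij, Rat.cast_sub_of_ne_zero (den_cast_ne_zero (hΔ.1 i j))
      (den_cast_ne_zero (hent1 i j))]
    have hone : (((1 : Matrix (Fin n) (Fin n) ℚ) i j : ℚ) : ZMod p)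
        = (1 : Matrix (Fin n) (Fin n) (ZMod p)) i j := by
      by_cases hij : i = j <;> simp [Matrix.one_apply, hij]
    have hu : (((u : Matrix (Fin n) (Fin n) ℚ) i j : ℚ) : ZMod p)
        = (1 : Matrix (Fin n) (Fin n) (ZMod p)) i j := by
      have := congrArg (fun N : Matrix (Fin n) (Fin n) (ZMod p) => N i j) hred
      simpa [red] using this
    rw [hone, hu, sub_self]
  exact key hp3 B hBne hBnorm hlp (by
    rw [h1B, ← Units.val_pow_eq_pow_val, hul, Units.val_one])
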